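/- Let F be a field, let N ∈ F^{m'×n} be an (m', n, r, d)-globally rigid matrix, and let k be a positive integer with m' = k·n. Let A ∈ F^{m'×m'} be the square matrix obtained by placing k copies of N side by side (so the columns of A consist of k copies of the columns of N). Then A is (m', m', r, k·d)-globally rigid. -/

import Mathlib

set_option maxHeartbeats 1000000


/-- `M` is `(m,n,r,t)`-globally rigid if every matrix differing from `M` in at most `t`
entries in total has rank at least `r`. -/
def GloballyRigid {F : Type*} [Field F] {m n : ℕ} (r t : ℕ)
    (M : Matrix (Fin m) (Fin n) F) : Prop :=
  ∀ N : Matrix (Fin m) (Fin n) F,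
    ({p : Fin m × Fin n | M p.1 p.2 ≠ N p.1 p.2}.ncard ≤ t) → r ≤ N.rank

/-- if `N ∈ F^{m'×n}` is `(m',n,r,d)`-globally rigid with `m' = k·n`, and
`A ∈ F^{m'×m'}` is obtained by placing `k` copies of `N` side by side (column `(a,b)` of
`A` is column `b` of `N`), then `A` is `(m',m',r,k·d)`-globally rigid. -/
theorem copies_of_globallyRigid {F : Type*} [Field F] {n k : ℕ} (r d : ℕ) (hk : 0 < k)
    (N : Matrix (Fin (k * n)) (Fin n) F) (hN : GloballyRigid r d N)
    (A : Matrix (Fin (k * n)) (Fin (k * n)) F)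
    (hA : ∀ (i : Fin (k * n)) (p : Fin k × Fin n), A i (finProdFinEquiv p) = N i p.2) :
    GloballyRigid r (k * d) A := by
  classical
  intro B hB
  set e : Fin k × Fin n ≃ Fin (k * n) := finProdFinEquiv with he
  set D : Finset (Fin (k * n) × Fin k × Fin n) :=
    Finset.univ.filter (fun q => A q.1 (e q.2) ≠ B q.1 (e q.2)) with hD
  have hcard : D.card = {p : Fin (k * n) × Fin (k * n) | A p.1 p.2 ≠ B p.1 p.2}.ncard := by
    rw [Set.ncard_eq_toFinset_card']
    apply Finset.card_bij (fun q _ => (q.1, e q.2))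
    · intro q hq
      simp only [hD, Finset.mem_filter, Finset.mem_univ, true_and] at hq
      simpa using hq
    · intro q1 h1 q2 h2 h
      rw [Prod.ext_iff] at h
      exact Prod.ext h.1 (e.injective h.2)
    · intro p hp
      refine ⟨(p.1, e.symm p.2), ?_, by simp⟩
      simp only [hD, Finset.mem_filter, Finset.mem_univ, true_and, Equiv.apply_symm_apply]
      simpa using hp
  have hDle : D.card ≤ k * d := hcard ▸ hB
  have hsum : D.card = ∑ a : Fin k, (D.filter (fun q => q.2.1 = a)).card :=
    Finset.card_eq_sum_card_fiberwise (fun q _ => Finset.mem_univ q.2.1)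
  have hex : ∃ a : Fin k, (D.filter (fun q => q.2.1 = a)).card ≤ d := by
    by_contra h
    push_neg at h
    have : k * (d + 1) ≤ D.card := by
      rw [hsum]
      calc k * (d + 1) = ∑ _a : Fin k, (d + 1) := by simp [mul_comm]
        _ ≤ ∑ a : Fin k, (D.filter (fun q => q.2.1 = a)).card :=
            Finset.sum_le_sum (fun a _ => h a)
    have hkk : k * (d + 1) = k * d + k := by ring
    omega
  obtain ⟨a, ha⟩ := hex
  set N' : Matrix (Fin (k * n)) (Fin n) F := fun i b => B i (e (a, b)) with hN'
  have hdiff : {p : Fin (k * n) × Fin n | N p.1 p.2 ≠ N' p.1 p.2}.ncard ≤ d := by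
    rw [Set.ncard_eq_toFinset_card']
    refine le_trans (Finset.card_le_card_of_injOn (fun p => (p.1, a, p.2)) ?_ ?_) ha
    · intro p hp
      simp only [Finset.mem_coe, Set.mem_toFinset, Set.mem_setOf_eq] at hp
      simp only [Finset.mem_coe, hD, Finset.mem_filter, Finset.mem_univ, true_and, and_true]
      rw [hA p.1 (a, p.2)]
      exact hp
    · intro p1 _ p2 _ h
      simp only [Prod.ext_iff] at h
      exact Prod.ext h.1 h.2.2
  have hr : r ≤ N'.rank := hN N' hdiff
  clear hdiff ha hsum hDle hcard hD hB hA
  clear D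
  clear_value N' e
  have hle : N'.rank ≤ B.rank := by
    rw [Matrix.rank_eq_finrank_span_cols, Matrix.rank_eq_finrank_span_cols]
    apply Submodule.finrank_mono
    apply Submodule.span_mono
    rintro _ ⟨b, rfl⟩
    refine ⟨e (a, b), ?_⟩
    ext i
    simp [hN', Matrix.transpose_apply, Matrix.col, Matrix.transpose]
  exact hr.trans hle
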